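/- For all x, y > 0: (i) if 0 ≤ α < β ≤ 1 then H_β(x,y) ≤ H_α(x,y); (ii) if 0 ≤ α < β ≤ 2 then G_β(x,y) ≤ G_α(x,y); (iii) if 0 ≤ α < β ≤ 1 then A_α(x,y) ≤ A_β(x,y). -/

import Mathlib

open scoped ComplexOrder

/-- Logarithmic mean. -/
noncomputable def LM (x y : ℝ) : ℝ :=
  if x = y then x else (x - y) / (Real.log x - Real.log y)

/-- The mean `A_α`, with `A_0 = LM`. -/
noncomputable def Amean (α x y : ℝ) : ℝ :=
  if x = y then x else if α = 0 then LM x y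
  else α * (x ^ α + y ^ α) * (x - y) / (2 * (x ^ α - y ^ α))

/-- The mean `G_α`, with `G_0 = LM`. -/
noncomputable def Gmean (α x y : ℝ) : ℝ :=
  if x = y then x else if α = 0 then LM x y
  else α * (x * y) ^ (α / 2) * (x - y) / (x ^ α - y ^ α)

/-- The mean `H_α`, with `H_0 = LM`. -/
noncomputable def Hmean (α x y : ℝ) : ℝ :=
  if x = y then x else if α = 0 then LM x y
  else 2 * α * (x * y) ^ α * (x - y) / ((x ^ α + y ^ α) * (x ^ α - y ^ α))

/-- The power difference mean `M_α`. -/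
noncomputable def Mmean (α x y : ℝ) : ℝ :=
  if x = y then x
  else ((α - 1) / α) * (x ^ α - y ^ α) / (x ^ (α - 1) - y ^ (α - 1))

/-- A continuous real function `φ` is positive definite if every matrix
`[φ(tᵢ - tⱼ)]` is positive semidefinite (as a complex matrix). -/
def IsPosDefFun (φ : ℝ → ℝ) : Prop :=
  Continuous φ ∧ ∀ (n : ℕ) (t : Fin n → ℝ),
    Matrix.PosSemidef (Matrix.of fun i j : Fin n => (φ (t i - t j) : ℂ))

open Real

private lemma exp_sub_exp' (a b : ℝ) :
    exp a - exp b = 2 * exp ((a + b) / 2) * sinh ((a - b) / 2) := by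
  rw [Real.sinh_eq]
  have h1 : 2 * exp ((a + b) / 2) * ((exp ((a - b) / 2) - exp (-((a - b) / 2))) / 2)
      = exp ((a + b) / 2) * exp ((a - b) / 2)
        - exp ((a + b) / 2) * exp (-((a - b) / 2)) := by ring
  rw [h1, ← Real.exp_add, ← Real.exp_add]
  ring_nf

private lemma exp_add_exp' (a b : ℝ) :
    exp a + exp b = 2 * exp ((a + b) / 2) * cosh ((a - b) / 2) := by
  rw [Real.cosh_eq]
  have h1 : 2 * exp ((a + b) / 2) * ((exp ((a - b) / 2) + exp (-((a - b) / 2))) / 2)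
      = exp ((a + b) / 2) * exp ((a - b) / 2)
        + exp ((a + b) / 2) * exp (-((a - b) / 2)) := by ring
  rw [h1, ← Real.exp_add, ← Real.exp_add]
  ring_nf

private lemma sinh_lt_self_mul_cosh {t : ℝ} (ht : 0 < t) : sinh t < t * cosh t := by
  have key : StrictMonoOn (fun s : ℝ => s * cosh s - sinh s) (Set.Ici 0) := by
    apply strictMonoOn_of_deriv_pos (convex_Ici 0)
    · exact (((continuous_id.mul Real.continuous_cosh).sub Real.continuous_sinh)).continuousOn
    · intro s hs
      rw [interior_Ici, Set.mem_Ioi] at hs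
      have hd : HasDerivAt (fun s : ℝ => s * cosh s - sinh s) (s * sinh s) s := by
        have := ((hasDerivAt_id s).mul (Real.hasDerivAt_cosh s)).sub (Real.hasDerivAt_sinh s)
        refine HasDerivAt.congr_deriv this ?_
        simp only [id_eq]; ring
      rw [hd.deriv]
      exact mul_pos hs (Real.sinh_pos_iff.mpr hs)
  have h0 := key (Set.self_mem_Ici) (Set.mem_Ici.mpr ht.le) ht
  simp only [Real.cosh_zero, Real.sinh_zero, zero_mul, sub_zero] at h0
  linarith

private lemma coreA {u v : ℝ} (hu : 0 < u) (huv : u < v) :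
    v * sinh u < u * sinh v := by
  have hv : 0 < v := hu.trans huv
  have key : StrictMonoOn (fun s : ℝ => sinh s / s) (Set.Ioi 0) := by
    apply strictMonoOn_of_deriv_pos (convex_Ioi 0)
    · exact ContinuousOn.div Real.continuous_sinh.continuousOn continuous_id.continuousOn
        (fun s hs => ne_of_gt hs)
    · intro s hs
      rw [interior_Ioi, Set.mem_Ioi] at hs
      have hd : HasDerivAt (fun s : ℝ => sinh s / s) ((cosh s * s - sinh s * 1) / s ^ 2) s :=
        (Real.hasDerivAt_sinh s).div (hasDerivAt_id s) (ne_of_gt hs)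
      rw [hd.deriv]
      apply div_pos _ (by positivity)
      have := sinh_lt_self_mul_cosh hs
      nlinarith
  have h := key (Set.mem_Ioi.mpr hu) (Set.mem_Ioi.mpr hv) huv
  rw [div_lt_div_iff₀ hu hv] at h
  linarith

private lemma coreB {u v : ℝ} (hu : 0 < u) (huv : u < v) :
    u * cosh u * sinh v < v * cosh v * sinh u := by
  have hv : 0 < v := hu.trans huv
  have key : StrictMonoOn (fun s : ℝ => s * cosh s / sinh s) (Set.Ioi 0) := by
    apply strictMonoOn_of_deriv_pos (convex_Ioi 0)
    · exact ContinuousOn.div (continuous_id.mul Real.continuous_cosh).continuousOn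
        Real.continuous_sinh.continuousOn
        (fun s hs => ne_of_gt (Real.sinh_pos_iff.mpr hs))
    · intro s hs
      rw [interior_Ioi, Set.mem_Ioi] at hs
      have hsinh : 0 < sinh s := Real.sinh_pos_iff.mpr hs
      have hd : HasDerivAt (fun s : ℝ => s * cosh s / sinh s)
          (((1 * cosh s + s * sinh s) * sinh s - s * cosh s * cosh s) / sinh s ^ 2) s := by
        have := (((hasDerivAt_id s).mul (Real.hasDerivAt_cosh s)).div (Real.hasDerivAt_sinh s)
          (ne_of_gt hsinh))
        refine HasDerivAt.congr_deriv this ?_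
        simp only [Pi.mul_apply, id_eq]
      rw [hd.deriv]
      apply div_pos _ (by positivity)
      have h1 : s < sinh s := Real.self_lt_sinh_iff.mpr hs
      have h2 : cosh s ^ 2 = sinh s ^ 2 + 1 := Real.cosh_sq s
      have h3 : (1 : ℝ) ≤ cosh s := Real.one_le_cosh s
      nlinarith
  have h := key (Set.mem_Ioi.mpr hu) (Set.mem_Ioi.mpr hv) huv
  have hsu : 0 < sinh u := Real.sinh_pos_iff.mpr hu
  have hsv : 0 < sinh v := Real.sinh_pos_iff.mpr hv
  rw [div_lt_div_iff₀ hsu hsv] at h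
  linarith

private lemma LM_symm (x y : ℝ) : LM x y = LM y x := by
  unfold LM
  rcases eq_or_ne x y with h | h
  · simp [h]
  · rw [if_neg h, if_neg (Ne.symm h),
      show x - y = -(y - x) by ring, show Real.log x - Real.log y = -(Real.log y - Real.log x)
        by ring, neg_div_neg_eq]

private lemma Amean_symm (α x y : ℝ) : Amean α x y = Amean α y x := by
  unfold Amean
  rcases eq_or_ne x y with h | h
  · simp [h]
  · rw [if_neg h, if_neg (Ne.symm h), LM_symm,
      show α * (x ^ α + y ^ α) * (x - y) = -(α * (y ^ α + x ^ α) * (y - x)) by ring,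
      show 2 * (x ^ α - y ^ α) = -(2 * (y ^ α - x ^ α)) by ring, neg_div_neg_eq]

private lemma Gmean_symm (α x y : ℝ) : Gmean α x y = Gmean α y x := by
  unfold Gmean
  rcases eq_or_ne x y with h | h
  · simp [h]
  · rw [if_neg h, if_neg (Ne.symm h), LM_symm, mul_comm x y,
      show α * (y * x) ^ (α / 2) * (x - y) = -(α * (y * x) ^ (α / 2) * (y - x)) by ring,
      show x ^ α - y ^ α = -(y ^ α - x ^ α) by ring, neg_div_neg_eq]

private lemma Hmean_symm (α x y : ℝ) : Hmean α x y = Hmean α y x := by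
  unfold Hmean
  rcases eq_or_ne x y with h | h
  · simp [h]
  · rw [if_neg h, if_neg (Ne.symm h), LM_symm, mul_comm x y,
      show 2 * α * (y * x) ^ α * (x - y) = -(2 * α * (y * x) ^ α * (y - x)) by ring,
      show (x ^ α + y ^ α) * (x ^ α - y ^ α) = -((y ^ α + x ^ α) * (y ^ α - x ^ α)) by ring,
      neg_div_neg_eq]

private lemma rpow_sub_eq {x y : ℝ} (α : ℝ) (hy : 0 < y) (hxy : y < x) :
    x ^ α - y ^ α = 2 * exp (α * ((log x + log y) / 2)) * sinh (α * ((log x - log y) / 2)) := by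
  have hx : 0 < x := hy.trans hxy
  rw [Real.rpow_def_of_pos hx, Real.rpow_def_of_pos hy, exp_sub_exp']
  ring_nf

private lemma rpow_add_eq {x y : ℝ} (α : ℝ) (hy : 0 < y) (hxy : y < x) :
    x ^ α + y ^ α = 2 * exp (α * ((log x + log y) / 2)) * cosh (α * ((log x - log y) / 2)) := by
  have hx : 0 < x := hy.trans hxy
  rw [Real.rpow_def_of_pos hx, Real.rpow_def_of_pos hy, exp_add_exp']
  ring_nf

private lemma sub_eq' {x y : ℝ} (hy : 0 < y) (hxy : y < x) :
    x - y = 2 * exp ((log x + log y) / 2) * sinh ((log x - log y) / 2) := by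
  have hx : 0 < x := hy.trans hxy
  nth_rewrite 1 [← Real.exp_log hx, ← Real.exp_log hy]
  rw [exp_sub_exp']

private lemma prod_rpow_eq {x y : ℝ} (γ : ℝ) (hy : 0 < y) (hxy : y < x) :
    (x * y) ^ γ = exp (γ * (log x + log y)) := by
  have hx : 0 < x := hy.trans hxy
  rw [Real.rpow_def_of_pos (mul_pos hx hy), Real.log_mul (ne_of_gt hx) (ne_of_gt hy)]
  ring_nf

set_option maxHeartbeats 1000000 in
private lemma LM_eq {x y : ℝ} (hy : 0 < y) (hxy : y < x) :
    LM x y = exp ((log x + log y) / 2) * sinh ((log x - log y) / 2)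
      * (1 / ((log x - log y) / 2)) := by
  have hx : 0 < x := hy.trans hxy
  have hlog : log y < log x := Real.log_lt_log hy hxy
  have hd : (0:ℝ) < (log x - log y) / 2 := by linarith
  unfold LM
  rw [if_neg (ne_of_gt hxy), sub_eq' hy hxy]
  field_simp

set_option maxHeartbeats 1000000 in
private lemma Gmean_eq {x y α : ℝ} (hα : 0 < α) (hy : 0 < y) (hxy : y < x) :
    Gmean α x y = exp ((log x + log y) / 2) * sinh ((log x - log y) / 2)
      * (α / sinh (α * ((log x - log y) / 2))) := by
  have hx : 0 < x := hy.trans hxy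
  have hlog : log y < log x := Real.log_lt_log hy hxy
  have hd : (0:ℝ) < (log x - log y) / 2 := by linarith
  have hs : 0 < sinh (α * ((log x - log y) / 2)) :=
    Real.sinh_pos_iff.mpr (mul_pos hα hd)
  unfold Gmean
  rw [if_neg (ne_of_gt hxy), if_neg (ne_of_gt hα), sub_eq' hy hxy, rpow_sub_eq α hy hxy,
    prod_rpow_eq (α / 2) hy hxy,
    show α / 2 * (log x + log y) = α * ((log x + log y) / 2) by ring]
  set E := Real.exp ((log x + log y) / 2) with hE
  set E2 := Real.exp (α * ((log x + log y) / 2)) with hE2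
  set S := Real.sinh ((log x - log y) / 2) with hS
  set S2 := Real.sinh (α * ((log x - log y) / 2)) with hS2
  set C2 := Real.cosh (α * ((log x - log y) / 2)) with hC2
  have h1 : (0:ℝ) < E2 := by rw [hE2]; exact Real.exp_pos _
  field_simp [ne_of_gt h1, ne_of_gt hs]

set_option maxHeartbeats 1000000 in
private lemma Hmean_eq {x y α : ℝ} (hα : 0 < α) (hy : 0 < y) (hxy : y < x) :
    Hmean α x y = exp ((log x + log y) / 2) * sinh ((log x - log y) / 2)
      * (2 * α / sinh (2 * α * ((log x - log y) / 2))) := by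
  have hx : 0 < x := hy.trans hxy
  have hlog : log y < log x := Real.log_lt_log hy hxy
  have hd : (0:ℝ) < (log x - log y) / 2 := by linarith
  have hs : 0 < sinh (α * ((log x - log y) / 2)) :=
    Real.sinh_pos_iff.mpr (mul_pos hα hd)
  have hc : 0 < cosh (α * ((log x - log y) / 2)) := Real.cosh_pos _
  unfold Hmean
  rw [if_neg (ne_of_gt hxy), if_neg (ne_of_gt hα), sub_eq' hy hxy, rpow_sub_eq α hy hxy,
    rpow_add_eq α hy hxy, prod_rpow_eq α hy hxy,
    show 2 * α * ((log x - log y) / 2) = 2 * (α * ((log x - log y) / 2)) by ring,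
    Real.sinh_two_mul,
    show α * (log x + log y) = α * ((log x + log y) / 2) + α * ((log x + log y) / 2) by ring,
    Real.exp_add]
  set E := Real.exp ((log x + log y) / 2) with hE
  set E2 := Real.exp (α * ((log x + log y) / 2)) with hE2
  set S := Real.sinh ((log x - log y) / 2) with hS
  set S2 := Real.sinh (α * ((log x - log y) / 2)) with hS2
  set C2 := Real.cosh (α * ((log x - log y) / 2)) with hC2
  have h1 : (0:ℝ) < E2 := by rw [hE2]; exact Real.exp_pos _
  field_simp [ne_of_gt h1, ne_of_gt hs, ne_of_gt hc]

set_option maxHeartbeats 1000000 in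
private lemma Amean_eq {x y α : ℝ} (hα : 0 < α) (hy : 0 < y) (hxy : y < x) :
    Amean α x y = exp ((log x + log y) / 2) * sinh ((log x - log y) / 2)
      * (α * cosh (α * ((log x - log y) / 2)) / sinh (α * ((log x - log y) / 2))) := by
  have hx : 0 < x := hy.trans hxy
  have hlog : log y < log x := Real.log_lt_log hy hxy
  have hd : (0:ℝ) < (log x - log y) / 2 := by linarith
  have hs : 0 < sinh (α * ((log x - log y) / 2)) :=
    Real.sinh_pos_iff.mpr (mul_pos hα hd)
  unfold Amean
  rw [if_neg (ne_of_gt hxy), if_neg (ne_of_gt hα), sub_eq' hy hxy, rpow_sub_eq α hy hxy,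
    rpow_add_eq α hy hxy]
  set E := Real.exp ((log x + log y) / 2) with hE
  set E2 := Real.exp (α * ((log x + log y) / 2)) with hE2
  set S := Real.sinh ((log x - log y) / 2) with hS
  set S2 := Real.sinh (α * ((log x - log y) / 2)) with hS2
  set C2 := Real.cosh (α * ((log x - log y) / 2)) with hC2
  have h1 : (0:ℝ) < E2 := by rw [hE2]; exact Real.exp_pos _
  field_simp [ne_of_gt h1, ne_of_gt hs]

set_option maxHeartbeats 1000000 in
private lemma main_half {x y : ℝ} (hy : 0 < y) (hxy : y < x) :
    (∀ α β : ℝ, 0 ≤ α → α < β → β ≤ 1 → Hmean β x y ≤ Hmean α x y) ∧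
    (∀ α β : ℝ, 0 ≤ α → α < β → β ≤ 2 → Gmean β x y ≤ Gmean α x y) ∧
    (∀ α β : ℝ, 0 ≤ α → α < β → β ≤ 1 → Amean α x y ≤ Amean β x y) := by
  have hx : 0 < x := hy.trans hxy
  have hlog : log y < log x := Real.log_lt_log hy hxy
  have hd : (0:ℝ) < (log x - log y) / 2 := by linarith
  have hsd : 0 < sinh ((log x - log y) / 2) := Real.sinh_pos_iff.mpr hd
  have hC : (0:ℝ) ≤ exp ((log x + log y) / 2) * sinh ((log x - log y) / 2) :=
    le_of_lt (mul_pos (Real.exp_pos _) hsd)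
  refine ⟨?_, ?_, ?_⟩
  · -- Hmean decreasing
    intro α β hα hαβ _
    have hβ : 0 < β := lt_of_le_of_lt hα hαβ
    have hsβ : 0 < sinh (2 * β * ((log x - log y) / 2)) :=
      Real.sinh_pos_iff.mpr (mul_pos (by linarith) hd)
    rcases eq_or_lt_of_le hα with h0 | h0
    · have hLM : Hmean α x y = LM x y := by
        unfold Hmean; rw [if_neg (ne_of_gt hxy), if_pos h0.symm]
      rw [hLM, LM_eq hy hxy, Hmean_eq hβ hy hxy]
      apply mul_le_mul_of_nonneg_left _ hC
      rw [div_le_div_iff₀ hsβ hd]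
      have := Real.self_lt_sinh_iff.mpr
        (show (0:ℝ) < 2 * β * ((log x - log y) / 2) from mul_pos (by linarith) hd)
      nlinarith
    · have hsα : 0 < sinh (2 * α * ((log x - log y) / 2)) :=
        Real.sinh_pos_iff.mpr (mul_pos (by linarith) hd)
      rw [Hmean_eq hβ hy hxy, Hmean_eq h0 hy hxy]
      apply mul_le_mul_of_nonneg_left _ hC
      rw [div_le_div_iff₀ hsβ hsα]
      have hcore := coreA (show (0:ℝ) < 2 * α * ((log x - log y) / 2) from
        mul_pos (by linarith) hd) (show 2 * α * ((log x - log y) / 2)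
          < 2 * β * ((log x - log y) / 2) by nlinarith)
      nlinarith
  · -- Gmean decreasing
    intro α β hα hαβ _
    have hβ : 0 < β := lt_of_le_of_lt hα hαβ
    have hsβ : 0 < sinh (β * ((log x - log y) / 2)) :=
      Real.sinh_pos_iff.mpr (mul_pos hβ hd)
    rcases eq_or_lt_of_le hα with h0 | h0
    · have hLM : Gmean α x y = LM x y := by
        unfold Gmean; rw [if_neg (ne_of_gt hxy), if_pos h0.symm]
      rw [hLM, LM_eq hy hxy, Gmean_eq hβ hy hxy]
      apply mul_le_mul_of_nonneg_left _ hC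
      rw [div_le_div_iff₀ hsβ hd]
      have := Real.self_lt_sinh_iff.mpr
        (show (0:ℝ) < β * ((log x - log y) / 2) from mul_pos hβ hd)
      nlinarith
    · have hsα : 0 < sinh (α * ((log x - log y) / 2)) :=
        Real.sinh_pos_iff.mpr (mul_pos h0 hd)
      rw [Gmean_eq hβ hy hxy, Gmean_eq h0 hy hxy]
      apply mul_le_mul_of_nonneg_left _ hC
      rw [div_le_div_iff₀ hsβ hsα]
      have hcore := coreA (show (0:ℝ) < α * ((log x - log y) / 2) from
        mul_pos h0 hd) (show α * ((log x - log y) / 2)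
          < β * ((log x - log y) / 2) by nlinarith)
      nlinarith
  · -- Amean increasing
    intro α β hα hαβ _
    have hβ : 0 < β := lt_of_le_of_lt hα hαβ
    have hsβ : 0 < sinh (β * ((log x - log y) / 2)) :=
      Real.sinh_pos_iff.mpr (mul_pos hβ hd)
    rcases eq_or_lt_of_le hα with h0 | h0
    · have hLM : Amean α x y = LM x y := by
        unfold Amean; rw [if_neg (ne_of_gt hxy), if_pos h0.symm]
      rw [hLM, LM_eq hy hxy, Amean_eq hβ hy hxy]
      apply mul_le_mul_of_nonneg_left _ hC
      rw [div_le_div_iff₀ hd hsβ]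
      have := sinh_lt_self_mul_cosh
        (show (0:ℝ) < β * ((log x - log y) / 2) from mul_pos hβ hd)
      nlinarith
    · have hsα : 0 < sinh (α * ((log x - log y) / 2)) :=
        Real.sinh_pos_iff.mpr (mul_pos h0 hd)
      rw [Amean_eq hβ hy hxy, Amean_eq h0 hy hxy]
      apply mul_le_mul_of_nonneg_left _ hC
      rw [div_le_div_iff₀ hsα hsβ]
      have hcore := coreB (show (0:ℝ) < α * ((log x - log y) / 2) from
        mul_pos h0 hd) (show α * ((log x - log y) / 2)
          < β * ((log x - log y) / 2) by nlinarith)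
      nlinarith

/-- Monotonicity in the parameter of the means `H`, `G` and `A`. -/
theorem statement3 (x y : ℝ) (hx : 0 < x) (hy : 0 < y) :
    (∀ α β : ℝ, 0 ≤ α → α < β → β ≤ 1 → Hmean β x y ≤ Hmean α x y) ∧
    (∀ α β : ℝ, 0 ≤ α → α < β → β ≤ 2 → Gmean β x y ≤ Gmean α x y) ∧
    (∀ α β : ℝ, 0 ≤ α → α < β → β ≤ 1 → Amean α x y ≤ Amean β x y) := by
  rcases lt_trichotomy y x with hxy | hxy | hxy
  · exact main_half hy hxy
  · subst hxy
    refine ⟨?_, ?_, ?_⟩ <;> intro α β _ _ _ <;>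
      simp [Hmean, Gmean, Amean]
  · obtain ⟨h1, h2, h3⟩ := main_half hx hxy
    refine ⟨?_, ?_, ?_⟩ <;> intro α β hα hαβ hβ
    · rw [Hmean_symm β, Hmean_symm α]; exact h1 α β hα hαβ hβ
    · rw [Gmean_symm β, Gmean_symm α]; exact h2 α β hα hαβ hβ
    · rw [Amean_symm β, Amean_symm α]; exact h3 α β hα hαβ hβ
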